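/- For every real t ≥ 0 and all integers n, k with 1 ≤ k ≤ n ≤ m, the (n,k) entry of the matrix exponential exp(tG) equals the sum over r from k to n of e^{−r(r−1)t/θ} · (2r−1) · (−1)^{r−k} · k_{(r−1)} · n_{[r]} / ( k! · (r−k)! · n_{(r)} ), where a_{[r]} = a(a−1)(a−2)⋯(a−r+1) denotes the falling factorial and a_{(r)} = a(a+1)⋯(a+r−1) denotes the rising factorial. (This is Tavaré's formula for the probability that n coalescent lineages have exactly k ancestral lineages time t in the past, with time measured so that the coalescence rate for r lineages is r(r−1)/θ.) -/

import Mathlib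

open Finset

/-- The index set `{1, …, m}`, realised as a subtype of `Fin (m + 1)`. -/
abbrev CoalIdx (m : ℕ) := {i : Fin (m + 1) // 1 ≤ (i : ℕ)}

/-- The generator `G` of the pure-death coalescent lineage-count chain on `{1, …, m}`:
`G n n = -n(n-1)/θ`, `G n (n-1) = n(n-1)/θ`, and all other entries zero. -/
noncomputable def coalG (m : ℕ) (θ : ℝ) : Matrix (CoalIdx m) (CoalIdx m) ℝ :=
  fun i j =>
    if (j.1 : ℕ) + 1 = (i.1 : ℕ) then
      ((i.1 : ℕ) : ℝ) * (((i.1 : ℕ) : ℝ) - 1) / θ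
    else if (j.1 : ℕ) = (i.1 : ℕ) then
      -(((i.1 : ℕ) : ℝ) * (((i.1 : ℕ) : ℝ) - 1) / θ)
    else 0

/-- Tavaré's formula: for `t ≥ 0` and `1 ≤ k ≤ n ≤ m`, the `(n,k)` entry of `exp (t G)` equals
`∑_{r=k}^{n} e^{-r(r-1)t/θ} (2r-1) (-1)^{r-k} k_{(r-1)} n_{[r]} / (k! (r-k)! n_{(r)})`,
where `a_{[r]}` is the falling factorial and `a_{(r)}` is the rising factorial. -/
noncomputable def Pf (n r : ℕ) : ℝ :=
  if r ≤ n then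
    ((n.factorial : ℝ) * ((n-1).factorial : ℝ) * ((2*r-1).factorial : ℝ)) /
      ((r.factorial : ℝ) * ((r-1).factorial : ℝ) * ((n-r).factorial : ℝ) * ((n+r-1).factorial : ℝ))
  else 0

noncomputable def Qf (r k : ℕ) : ℝ :=
  if k ≤ r then
    (-1 : ℝ)^(r-k) * (((r-1).factorial : ℝ) * (r.factorial : ℝ) * ((k+r-2).factorial : ℝ)) /
      (((k-1).factorial : ℝ) * (k.factorial : ℝ) * ((r-k).factorial : ℝ) * ((2*r-2).factorial : ℝ))
  else 0

lemma fact_ne (j : ℕ) : ((j.factorial : ℝ)) ≠ 0 := by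
  exact_mod_cast j.factorial_pos.ne'

lemma Pf_diag (n : ℕ) : Pf n n = 1 := by
  unfold Pf
  rw [if_pos le_rfl]
  have h1 : n - n = 0 := by omega
  have h2 : n + n - 1 = 2 * n - 1 := by omega
  rw [h1, h2, Nat.factorial_zero]
  field_simp
  norm_num

lemma Pf_zero {n r : ℕ} (h : n < r) : Pf n r = 0 := by
  unfold Pf; rw [if_neg (by omega)]

lemma Qf_diag (r : ℕ) (hr : 1 ≤ r) : Qf r r = 1 := by
  unfold Qf
  rw [if_pos le_rfl]
  have h1 : r - r = 0 := by omega
  have h2 : r + r - 2 = 2 * r - 2 := by omega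
  rw [h1, h2, Nat.factorial_zero, pow_zero]
  field_simp
  norm_num

lemma Qf_zero {r k : ℕ} (h : r < k) : Qf r k = 0 := by
  unfold Qf; rw [if_neg (by omega)]

lemma recP (n r : ℕ) (hr : 1 ≤ r) (hrn : r < n) :
    ((n:ℝ) * ((n:ℝ) - 1)) * Pf (n-1) r = ((n:ℝ) * ((n:ℝ) - 1) - (r:ℝ) * ((r:ℝ) - 1)) * Pf n r := by
  obtain ⟨b, rfl⟩ : ∃ b, r = b + 1 := ⟨r - 1, by omega⟩
  obtain ⟨a, rfl⟩ : ∃ a, n = b + 2 + a := ⟨n - b - 2, by omega⟩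
  unfold Pf
  rw [if_pos (by omega), if_pos (by omega)]
  have e1 : b + 2 + a - 1 = b + 1 + a := by omega
  have e2 : 2 * (b+1) - 1 = 2*b+1 := by omega
  have e3 : b + 1 - 1 = b := by omega
  have e4 : b + 2 + a - (b + 1) = a + 1 := by omega
  have e5 : b + 2 + a + (b + 1) - 1 = 2*b + 2 + a := by omega
  have e6 : b + 1 + a - 1 = b + a := by omega
  have e7 : b + 1 + a - (b + 1) = a := by omega
  have e8 : b + 1 + a + (b + 1) - 1 = 2*b + 1 + a := by omega
  rw [e1, e2, e3, e4, e5, e6, e7, e8]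
  have f1 : ((b+2+a).factorial : ℝ) = (b+2+a) * ((b+1+a).factorial) := by
    rw [show b+2+a = (b+1+a)+1 by omega, Nat.factorial_succ]; push_cast; ring
  have f2 : ((b+1+a).factorial : ℝ) = (b+1+a) * ((b+a).factorial) := by
    rw [show b+1+a = (b+a)+1 by omega, Nat.factorial_succ]; push_cast; ring
  have f3 : ((a+1).factorial : ℝ) = (a+1) * (a.factorial) := by
    rw [Nat.factorial_succ]; push_cast; ring
  have f4 : ((2*b+2+a).factorial : ℝ) = (2*b+2+a) * ((2*b+1+a).factorial) := by
    rw [show 2*b+2+a = (2*b+1+a)+1 by omega, Nat.factorial_succ]; push_cast; ring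
  rw [f1, f2, f3, f4]
  have := fact_ne (b+a)
  have := fact_ne a
  have := fact_ne (2*b+1+a)
  have := fact_ne (b+1)
  have := fact_ne b
  have := fact_ne (2*b+1)
  field_simp
  push_cast
  ring

lemma recQ (r k : ℕ) (hk : 1 ≤ k) (hkr : k < r) :
    ((k:ℝ) * ((k:ℝ) + 1)) * Qf r (k+1) = ((k:ℝ) * ((k:ℝ) - 1) - (r:ℝ) * ((r:ℝ) - 1)) * Qf r k := by
  obtain ⟨b, rfl⟩ : ∃ b, k = b + 1 := ⟨k - 1, by omega⟩
  obtain ⟨s, rfl⟩ : ∃ s, r = b + 2 + s := ⟨r - b - 2, by omega⟩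
  unfold Qf
  rw [if_pos (by omega), if_pos (by omega)]
  have e1 : b + 2 + s - (b + 1 + 1) = s := by omega
  have e2 : b + 2 + s - 1 = b + 1 + s := by omega
  have e3 : b + 1 + 1 + (b + 2 + s) - 2 = 2*b + 2 + s := by omega
  have e4 : b + 1 + 1 - 1 = b + 1 := by omega
  have e5 : 2 * (b + 2 + s) - 2 = 2*b + 2 + s + s := by omega
  have e6 : b + 2 + s - (b + 1) = s + 1 := by omega
  have e7 : b + 1 - 1 = b := by omega
  have e8 : b + 1 + (b + 2 + s) - 2 = 2*b + 1 + s := by omega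
  rw [e1, e2, e3, e4, e5, e6, e7, e8]
  have f1 : ((2*b+2+s).factorial : ℝ) = (2*b+2+s) * ((2*b+1+s).factorial) := by
    rw [show 2*b+2+s = (2*b+1+s)+1 by omega, Nat.factorial_succ]; push_cast; ring
  have f2 : ((b+1+1).factorial : ℝ) = (b+2) * ((b+1).factorial) := by
    rw [show b+1+1 = (b+1)+1 from rfl, Nat.factorial_succ]; push_cast; ring
  have f3 : ((b+1).factorial : ℝ) = (b+1) * (b.factorial) := by
    rw [Nat.factorial_succ]; push_cast; ring
  have f4 : ((s+1).factorial : ℝ) = (s+1) * (s.factorial) := by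
    rw [Nat.factorial_succ]; push_cast; ring
  rw [f1, f2, f3, f4]
  have := fact_ne (2*b+1+s)
  have := fact_ne b
  have := fact_ne s
  have := fact_ne (b+1+s)
  have := fact_ne (b+2+s)
  have := fact_ne (2*b+2+s+s)
  field_simp
  push_cast
  ring

lemma prod_asc' (c : ℕ) (hc : 1 ≤ c) :
    ∀ s : ℕ, (∏ i ∈ Finset.range s, ((c:ℝ) + (i:ℝ))) * (((c-1).factorial : ℝ)) = (((c-1+s).factorial : ℝ))
  | 0 => by simp
  | (s+1) => by
      rw [Finset.prod_range_succ, show c-1+(s+1) = (c-1+s)+1 by omega, Nat.factorial_succ]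
      have := prod_asc' c hc s
      push_cast [Nat.cast_sub hc] at this ⊢
      nlinarith [this]

lemma prod_desc' (n : ℕ) :
    ∀ r : ℕ, r ≤ n → (∏ i ∈ Finset.range r, ((n:ℝ) - (i:ℝ))) * (((n-r).factorial : ℝ)) = ((n.factorial : ℝ))
  | 0, _ => by simp
  | (r+1), h => by
      rw [Finset.prod_range_succ]
      have h2 : (n - r).factorial = (n-r) * (n-(r+1)).factorial := by
        rw [show n - r = (n-(r+1))+1 by omega, Nat.factorial_succ]
      have := prod_desc' n r (by omega)
      rw [h2] at this
      push_cast [Nat.cast_sub (show r+1 ≤ n from h), Nat.cast_sub (show r ≤ n by omega)] at this ⊢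
      nlinarith [this]

lemma PQ_entry (n r k : ℕ) (hk : 1 ≤ k) (hkr : k ≤ r) (hrn : r ≤ n) :
    Pf n r * Qf r k =
      ((2 * (r : ℝ) - 1) * (-1 : ℝ) ^ (r - k) *
          (∏ i ∈ Finset.range (r - 1), ((k : ℝ) + (i : ℝ))) *
          (∏ i ∈ Finset.range r, ((n : ℝ) - (i : ℝ)))) /
        ((k.factorial : ℝ) * ((r - k).factorial : ℝ) *
          ∏ i ∈ Finset.range r, ((n : ℝ) + (i : ℝ))) := by
  obtain ⟨b, rfl⟩ : ∃ b, k = b + 1 := ⟨k - 1, by omega⟩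
  obtain ⟨s, rfl⟩ : ∃ s, r = b + 1 + s := ⟨r - b - 1, by omega⟩
  obtain ⟨a, rfl⟩ : ∃ a, n = b + 1 + s + a := ⟨n - b - 1 - s, by omega⟩
  unfold Pf Qf
  rw [if_pos (by omega : b+1+s ≤ b+1+s+a), if_pos (by omega : b+1 ≤ b+1+s)]
  have h1 : b+1+s - (b+1) = s := by omega
  have h2 : b+1+s - 1 = b+s := by omega
  have h3 : b+1+s+a - 1 = b+s+a := by omega
  have h4 : 2*(b+1+s) - 1 = 2*b+2*s+1 := by omega
  have h5 : b+1+s+a - (b+1+s) = a := by omega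
  have h6 : b+1+s+a + (b+1+s) - 1 = 2*b+2*s+a+1 := by omega
  have h7 : b+1 - 1 = b := by omega
  have h8 : b+1 + (b+1+s) - 2 = 2*b+s := by omega
  have h9 : 2*(b+1+s) - 2 = 2*b+2*s := by omega
  rw [h1, h2, h3, h4, h5, h6, h7, h8, h9]
  have p1 : (∏ i ∈ Finset.range (b+s), (((b+1 : ℕ) : ℝ) + (i:ℝ))) =
      (((2*b+s).factorial : ℝ)) / ((b.factorial : ℝ)) := by
    rw [eq_div_iff (fact_ne b)]
    have := prod_asc' (b+1) (by omega) (b+s)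
    rw [show b+1-1 = b by omega, show b+(b+s) = 2*b+s by omega] at this
    exact this
  have p2 : (∏ i ∈ Finset.range (b+1+s), (((b+1+s+a : ℕ) : ℝ) - (i:ℝ))) =
      (((b+1+s+a).factorial : ℝ)) / ((a.factorial : ℝ)) := by
    rw [eq_div_iff (fact_ne a)]
    have := prod_desc' (b+1+s+a) (b+1+s) (by omega)
    rw [h5] at this
    exact this
  have p3 : (∏ i ∈ Finset.range (b+1+s), (((b+1+s+a : ℕ) : ℝ) + (i:ℝ))) =
      (((2*b+2*s+a+1).factorial : ℝ)) / (((b+s+a).factorial : ℝ)) := by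
    rw [eq_div_iff (fact_ne (b+s+a))]
    have := prod_asc' (b+1+s+a) (by omega) (b+1+s)
    rw [show b+1+s+a-1 = b+s+a by omega, show b+s+a+(b+1+s) = 2*b+2*s+a+1 by omega] at this
    exact this
  rw [p1, p2, p3]
  have f1 : (((2*b+2*s+1).factorial : ℝ)) = (2*(b:ℝ)+2*(s:ℝ)+1) * (((2*b+2*s).factorial : ℝ)) := by
    rw [show 2*b+2*s+1 = (2*b+2*s)+1 from rfl, Nat.factorial_succ]; push_cast; ring
  rw [f1]
  have := fact_ne b
  have := fact_ne s
  have := fact_ne a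
  have := fact_ne (b+1)
  have := fact_ne (b+s)
  have := fact_ne (b+s+a)
  have := fact_ne (2*b+s)
  have := fact_ne (2*b+2*s)
  have := fact_ne (2*b+2*s+a+1)
  have := fact_ne (b+1+s)
  have := fact_ne (b+1+s+a)
  field_simp
  push_cast
  ring

noncomputable def Pmat (m : ℕ) : Matrix (CoalIdx m) (CoalIdx m) ℝ := fun i j => Pf (i.1 : ℕ) (j.1 : ℕ)
noncomputable def Qmat (m : ℕ) : Matrix (CoalIdx m) (CoalIdx m) ℝ := fun i j => Qf (i.1 : ℕ) (j.1 : ℕ)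
noncomputable def dvec (m : ℕ) (θ : ℝ) : CoalIdx m → ℝ :=
  fun r => -(((r.1 : ℕ) : ℝ) * (((r.1 : ℕ) : ℝ) - 1)) / θ
noncomputable def Dmat (m : ℕ) (θ : ℝ) : Matrix (CoalIdx m) (CoalIdx m) ℝ :=
  Matrix.diagonal (dvec m θ)

lemma coalIdx_ext {m : ℕ} {i j : CoalIdx m} (h : (i.1 : ℕ) = (j.1 : ℕ)) : i = j :=
  Subtype.ext (Fin.ext h)

lemma GP_eq (m : ℕ) (θ : ℝ) (hθ : θ ≠ 0) : coalG m θ * Pmat m = Pmat m * Dmat m θ := by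
  ext i r
  rw [Matrix.mul_apply, Dmat, Matrix.mul_diagonal]
  have key : ∀ n rr : ℕ, 1 ≤ rr → 1 ≤ n →
      (n:ℝ) * ((n:ℝ)-1) * Pf (n-1) rr = ((n:ℝ)*((n:ℝ)-1) - (rr:ℝ)*((rr:ℝ)-1)) * Pf n rr := by
    intro n rr h1 h2
    rcases lt_trichotomy rr n with h | h | h
    · exact recP n rr h1 h
    · subst h
      rw [Pf_zero (by omega), sub_self, zero_mul, mul_zero]
    · rw [Pf_zero h, Pf_zero (by omega), mul_zero, mul_zero]
  by_cases hi : 2 ≤ (i.1 : ℕ)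
  · -- two nonzero entries in row i
    have hlt : (i.1 : ℕ) - 1 < m + 1 := by omega
    set j₀ : CoalIdx m := ⟨⟨(i.1 : ℕ) - 1, hlt⟩, by simp; omega⟩ with hj₀
    have hj₀v : (j₀.1 : ℕ) = (i.1 : ℕ) - 1 := rfl
    have hne : j₀ ≠ i := by
      intro h
      have := congrArg (fun x : CoalIdx m => (x.1 : ℕ)) h
      simp [hj₀v] at this; omega
    rw [Finset.sum_eq_add_of_mem j₀ i (Finset.mem_univ _) (Finset.mem_univ _) hne]
    · have hGj₀ : coalG m θ i j₀ = ((i.1 : ℕ) : ℝ) * (((i.1 : ℕ) : ℝ) - 1) / θ := by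
        unfold coalG; rw [if_pos (by rw [hj₀v]; omega)]
      have hGi : coalG m θ i i = -(((i.1 : ℕ) : ℝ) * (((i.1 : ℕ) : ℝ) - 1) / θ) := by
        unfold coalG; rw [if_neg (by omega), if_pos rfl]
      rw [hGj₀, hGi]
      have hkey := key (i.1 : ℕ) (r.1 : ℕ) r.2 (by omega)
      show (↑↑i.1 : ℝ) * (↑↑i.1 - 1) / θ * Pmat m j₀ r + -(↑↑i.1 * (↑↑i.1 - 1) / θ) * Pmat m i r =
        Pmat m i r * dvec m θ r
      unfold Pmat dvec
      rw [hj₀v]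
      field_simp
      linear_combination hkey
    · intro c _ hc
      have hc1 : c ≠ j₀ := hc.1
      have hc2 : c ≠ i := hc.2
      have : coalG m θ i c = 0 := by
        unfold coalG
        rw [if_neg, if_neg]
        · intro h; exact hc2 (coalIdx_ext h)
        · intro h; exact hc1 (coalIdx_ext (by rw [hj₀v]; omega))
      rw [this, zero_mul]
  · -- row i is zero since i.val = 1
    have hi1 : (i.1 : ℕ) = 1 := by have := i.2; omega
    have hrow : ∀ j : CoalIdx m, coalG m θ i j = 0 ∨ j = i := by
      intro j
      by_cases h : (j.1 : ℕ) = (i.1 : ℕ)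
      · exact Or.inr (coalIdx_ext h)
      · left; unfold coalG
        rw [if_neg (by have := j.2; omega), if_neg h]
    rw [Finset.sum_eq_single i]
    · show coalG m θ i i * Pmat m i r = Pmat m i r * dvec m θ r
      have : coalG m θ i i = 0 := by
        unfold coalG; rw [if_neg (by omega), if_pos rfl, hi1]; norm_num
      rw [this, zero_mul]
      unfold Pmat dvec
      rcases lt_trichotomy (r.1 : ℕ) (i.1 : ℕ) with h | h | h
      · have := r.2; omega
      · rw [hi1] at h ⊢
        rw [h]; norm_num
      · rw [Pf_zero (by omega : (i.1:ℕ) < (r.1:ℕ))]; simp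
    · intro j _ hj
      rcases hrow j with h | h
      · rw [h, zero_mul]
      · exact absurd h hj
    · intro h; exact absurd (Finset.mem_univ i) h

lemma QG_eq (m : ℕ) (θ : ℝ) (hθ : θ ≠ 0) : Qmat m * coalG m θ = Dmat m θ * Qmat m := by
  ext r k
  rw [Matrix.mul_apply, Dmat, Matrix.diagonal_mul]
  have key2 : ∀ rr kk : ℕ, 1 ≤ kk → 1 ≤ rr →
      (kk:ℝ) * ((kk:ℝ)+1) * Qf rr (kk+1) = ((kk:ℝ)*((kk:ℝ)-1) - (rr:ℝ)*((rr:ℝ)-1)) * Qf rr kk := by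
    intro rr kk h1 h2
    rcases lt_trichotomy kk rr with h | h | h
    · exact recQ rr kk h1 h
    · subst h
      rw [Qf_zero (by omega), sub_self, zero_mul, mul_zero]
    · rw [Qf_zero h, Qf_zero (by omega), mul_zero, mul_zero]
  by_cases hk : (k.1 : ℕ) < m
  · have hlt : (k.1 : ℕ) + 1 < m + 1 := by omega
    set j₁ : CoalIdx m := ⟨⟨(k.1 : ℕ) + 1, hlt⟩, by simp⟩ with hj₁
    have hj₁v : (j₁.1 : ℕ) = (k.1 : ℕ) + 1 := rfl
    have hne : j₁ ≠ k := by
      intro h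
      have := congrArg (fun x : CoalIdx m => (x.1 : ℕ)) h
      simp [hj₁v] at this
    rw [Finset.sum_eq_add_of_mem j₁ k (Finset.mem_univ _) (Finset.mem_univ _) hne]
    · have hGj₁ : coalG m θ j₁ k = ((j₁.1 : ℕ) : ℝ) * (((j₁.1 : ℕ) : ℝ) - 1) / θ := by
        unfold coalG; rw [if_pos (by rw [hj₁v])]
      have hGk : coalG m θ k k = -(((k.1 : ℕ) : ℝ) * (((k.1 : ℕ) : ℝ) - 1) / θ) := by
        unfold coalG; rw [if_neg (by omega), if_pos rfl]
      rw [hGj₁, hGk]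
      have hkey := key2 (r.1 : ℕ) (k.1 : ℕ) k.2 r.2
      show Qmat m r j₁ * (↑↑↑j₁ * (↑↑↑j₁ - 1) / θ) + Qmat m r k * -(↑↑↑k * (↑↑↑k - 1) / θ) =
        dvec m θ r * Qmat m r k
      unfold Qmat dvec
      rw [hj₁v]
      push_cast
      push_cast at hkey
      field_simp
      linear_combination hkey
    · intro c _ hc
      have : coalG m θ c k = 0 := by
        unfold coalG
        rw [if_neg, if_neg]
        · intro h; exact hc.2 (coalIdx_ext h.symm)
        · intro h; exact hc.1 (coalIdx_ext (by rw [hj₁v]; omega))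
      rw [this, mul_zero]
  · have hkm : (k.1 : ℕ) = m := by have := k.1.2; omega
    rw [Finset.sum_eq_single k]
    · have hGk : coalG m θ k k = -(((k.1 : ℕ) : ℝ) * (((k.1 : ℕ) : ℝ) - 1) / θ) := by
        unfold coalG; rw [if_neg (by omega), if_pos rfl]
      rw [hGk]
      show Qmat m r k * -(↑↑↑k * (↑↑↑k - 1) / θ) = dvec m θ r * Qmat m r k
      unfold Qmat dvec
      rcases lt_trichotomy (r.1 : ℕ) (k.1 : ℕ) with h | h | h
      · rw [Qf_zero h]; ring
      · rw [h]; ring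
      · have := r.1.2; omega
    · intro j _ hj
      have : coalG m θ j k = 0 := by
        unfold coalG
        rw [if_neg, if_neg]
        · intro h; exact hj (coalIdx_ext h.symm)
        · have := j.1.2; omega
      rw [this, mul_zero]
    · intro h; exact absurd (Finset.mem_univ k) h

lemma QP_one (m : ℕ) (θ : ℝ) (hθ : θ ≠ 0) : Qmat m * Pmat m = 1 := by
  -- QP commutes with the diagonal D, which has distinct entries, hence QP is diagonal;
  -- unitriangularity gives diagonal entries 1.
  have hcomm : (Qmat m * Pmat m) * Dmat m θ = Dmat m θ * (Qmat m * Pmat m) := by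
    calc (Qmat m * Pmat m) * Dmat m θ = Qmat m * (Pmat m * Dmat m θ) := by rw [mul_assoc]
      _ = Qmat m * (coalG m θ * Pmat m) := by rw [← GP_eq m θ hθ]
      _ = (Qmat m * coalG m θ) * Pmat m := by rw [mul_assoc]
      _ = (Dmat m θ * Qmat m) * Pmat m := by rw [QG_eq m θ hθ]
      _ = Dmat m θ * (Qmat m * Pmat m) := by rw [mul_assoc]
  have hdinj : ∀ i j : CoalIdx m, i ≠ j → dvec m θ i ≠ dvec m θ j := by
    intro i j hij hd
    apply hij
    apply coalIdx_ext
    have h1 : 1 ≤ (i.1 : ℕ) := i.2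
    have h2 : 1 ≤ (j.1 : ℕ) := j.2
    by_contra hne
    unfold dvec at hd
    have hd' : ((i.1:ℕ):ℝ) * (((i.1:ℕ):ℝ) - 1) = ((j.1:ℕ):ℝ) * (((j.1:ℕ):ℝ) - 1) := by
      field_simp at hd
      linarith [hd]
    rcases lt_or_gt_of_ne hne with h | h
    · have c1 : ((i.1:ℕ):ℝ) + 1 ≤ ((j.1:ℕ):ℝ) := by exact_mod_cast h
      have c2 : (1:ℝ) ≤ ((i.1:ℕ):ℝ) := by exact_mod_cast h1
      nlinarith
    · have c1 : ((j.1:ℕ):ℝ) + 1 ≤ ((i.1:ℕ):ℝ) := by exact_mod_cast h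
      have c2 : (1:ℝ) ≤ ((j.1:ℕ):ℝ) := by exact_mod_cast h2
      nlinarith
  ext i j
  by_cases hij : i = j
  · subst hij
    rw [Matrix.one_apply_eq, Matrix.mul_apply]
    rw [Finset.sum_eq_single i]
    · show Qf (i.1:ℕ) (i.1:ℕ) * Pf (i.1:ℕ) (i.1:ℕ) = 1
      rw [Qf_diag _ i.2, Pf_diag]; norm_num
    · intro b _ hb
      have : (b.1:ℕ) ≠ (i.1:ℕ) := fun h => hb (coalIdx_ext h)
      rcases this.lt_or_gt with h | h
      · show Qf (i.1:ℕ) (b.1:ℕ) * Pf (b.1:ℕ) (i.1:ℕ) = 0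
        rw [Pf_zero h, mul_zero]
      · show Qf (i.1:ℕ) (b.1:ℕ) * Pf (b.1:ℕ) (i.1:ℕ) = 0
        rw [Qf_zero h, zero_mul]
    · intro h; exact absurd (Finset.mem_univ i) h
  · rw [Matrix.one_apply_ne hij]
    have h2 : ((Qmat m * Pmat m) * Dmat m θ) i j = (Dmat m θ * (Qmat m * Pmat m)) i j := by
      rw [hcomm]
    rw [Dmat, Matrix.mul_diagonal, Matrix.diagonal_mul] at h2
    have hd := hdinj i j hij
    by_contra hne
    apply hd
    have : (Qmat m * Pmat m) i j * (dvec m θ j - dvec m θ i) = 0 := by ring_nf; linarith [h2]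
    rcases mul_eq_zero.mp this with h | h
    · exact absurd h hne
    · linarith [sub_eq_zero.mp h]

lemma PQ_one (m : ℕ) (θ : ℝ) (hθ : θ ≠ 0) : Pmat m * Qmat m = 1 :=
  mul_eq_one_comm.mpr (QP_one m θ hθ)

lemma G_decomp (m : ℕ) (θ : ℝ) (hθ : θ ≠ 0) :
    coalG m θ = Pmat m * Dmat m θ * Qmat m := by
  calc coalG m θ = coalG m θ * (Pmat m * Qmat m) := by rw [PQ_one m θ hθ, mul_one]
    _ = (coalG m θ * Pmat m) * Qmat m := by rw [mul_assoc]
    _ = (Pmat m * Dmat m θ) * Qmat m := by rw [GP_eq m θ hθ]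

noncomputable def tavTerm (θ t : ℝ) (n k j : ℕ) : ℝ :=
  Pf n j * Real.exp (t * (-((j:ℝ) * ((j:ℝ) - 1)) / θ)) * Qf j k

theorem stmt0 (m : ℕ) (hm : 1 ≤ m) (θ : ℝ) (hθ : 0 < θ)
    (t : ℝ) (ht : 0 ≤ t) (n k : ℕ) (hk : 1 ≤ k) (hkn : k ≤ n) (hnm : n ≤ m) :
    NormedSpace.exp (t • coalG m θ)
        ⟨⟨n, Nat.lt_succ_of_le hnm⟩, hk.trans hkn⟩
        ⟨⟨k, Nat.lt_succ_of_le (hkn.trans hnm)⟩, hk⟩ =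
      ∑ r ∈ Finset.Icc k n,
        Real.exp (-((r : ℝ) * ((r : ℝ) - 1) * t) / θ) *
          ((2 * (r : ℝ) - 1) * (-1 : ℝ) ^ (r - k) *
            (∏ i ∈ Finset.range (r - 1), ((k : ℝ) + (i : ℝ))) *
            (∏ i ∈ Finset.range r, ((n : ℝ) - (i : ℝ)))) /
          ((k.factorial : ℝ) * ((r - k).factorial : ℝ) *
            ∏ i ∈ Finset.range r, ((n : ℝ) + (i : ℝ))) := by
  have hθ' : θ ≠ 0 := hθ.ne'
  have hPQ := PQ_one m θ hθ'
  have hQP := QP_one m θ hθ'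
  set U : (Matrix (CoalIdx m) (CoalIdx m) ℝ)ˣ := ⟨Pmat m, Qmat m, hPQ, hQP⟩ with hU
  have hsmul : t • coalG m θ = (U : Matrix (CoalIdx m) (CoalIdx m) ℝ) * (t • Dmat m θ) *
      ((U⁻¹ : (Matrix (CoalIdx m) (CoalIdx m) ℝ)ˣ) : Matrix (CoalIdx m) (CoalIdx m) ℝ) := by
    show t • coalG m θ = Pmat m * (t • Dmat m θ) * Qmat m
    rw [mul_smul_comm, smul_mul_assoc, ← G_decomp m θ hθ']
  have hexp : NormedSpace.exp (t • coalG m θ) =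
      Pmat m * NormedSpace.exp (t • Dmat m θ) * Qmat m := by
    rw [hsmul]
    exact Matrix.exp_units_conj U _
  have hdiag : NormedSpace.exp (t • Dmat m θ) =
      Matrix.diagonal (fun r : CoalIdx m => Real.exp (t * dvec m θ r)) := by
    rw [Dmat, ← Matrix.diagonal_smul, Matrix.exp_diagonal]
    refine congrArg Matrix.diagonal (funext fun r => ?_)
    rw [Real.exp_eq_exp_ℝ, Pi.coe_exp]
    rfl
  set nI : CoalIdx m := ⟨⟨n, Nat.lt_succ_of_le hnm⟩, hk.trans hkn⟩ with hnI
  set kI : CoalIdx m := ⟨⟨k, Nat.lt_succ_of_le (hkn.trans hnm)⟩, hk⟩ with hkI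
  rw [hexp, hdiag, Matrix.mul_apply]
  simp_rw [Matrix.mul_diagonal]
  calc ∑ j : CoalIdx m, Pmat m nI j * Real.exp (t * dvec m θ j) * Qmat m j kI
      = ∑ j : CoalIdx m, tavTerm θ t n k ((j.1 : ℕ)) := by
        apply Finset.sum_congr rfl
        intro j _
        show Pf (nI.1 : ℕ) (j.1 : ℕ) * Real.exp (t * dvec m θ j) * Qf (j.1 : ℕ) (kI.1 : ℕ) = _
        rfl
    _ = ∑ x ∈ Finset.univ.filter (fun x : Fin (m+1) => 1 ≤ (x : ℕ)),
          tavTerm θ t n k (x : ℕ) := by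
        exact (Finset.sum_subtype _ (by simp) (fun x : Fin (m+1) => tavTerm θ t n k (x : ℕ))).symm
    _ = ∑ x : Fin (m+1), if 1 ≤ (x : ℕ) then tavTerm θ t n k (x : ℕ) else 0 :=
        Finset.sum_filter _ _
    _ = ∑ j ∈ Finset.range (m+1), if 1 ≤ j then tavTerm θ t n k j else 0 :=
        Fin.sum_univ_eq_sum_range (fun j => if 1 ≤ j then tavTerm θ t n k j else 0) (m+1)
    _ = ∑ j ∈ Finset.Icc k n, if 1 ≤ j then tavTerm θ t n k j else 0 := by
        refine (Finset.sum_subset ?_ ?_).symm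
        · intro x hx
          rw [Finset.mem_Icc] at hx
          rw [Finset.mem_range]
          omega
        · intro x _ hx
          rw [Finset.mem_Icc] at hx
          by_cases h1 : 1 ≤ x
          · rw [if_pos h1]
            unfold tavTerm
            rcases (by omega : x < k ∨ n < x) with h | h
            · rw [Qf_zero h, mul_zero]
            · rw [Pf_zero h, zero_mul, zero_mul]
          · rw [if_neg h1]
    _ = ∑ r ∈ Finset.Icc k n,
        Real.exp (-((r : ℝ) * ((r : ℝ) - 1) * t) / θ) *
          ((2 * (r : ℝ) - 1) * (-1 : ℝ) ^ (r - k) *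
            (∏ i ∈ Finset.range (r - 1), ((k : ℝ) + (i : ℝ))) *
            (∏ i ∈ Finset.range r, ((n : ℝ) - (i : ℝ)))) /
          ((k.factorial : ℝ) * ((r - k).factorial : ℝ) *
            ∏ i ∈ Finset.range r, ((n : ℝ) + (i : ℝ))) := by
        apply Finset.sum_congr rfl
        intro j hj
        rw [Finset.mem_Icc] at hj
        rw [if_pos (by omega : 1 ≤ j)]
        unfold tavTerm
        have harg : t * (-((j:ℝ) * ((j:ℝ) - 1)) / θ) = -((j:ℝ) * ((j:ℝ) - 1) * t) / θ := by
          ring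
        rw [harg]
        have hPQj := PQ_entry n j k hk hj.1 hj.2
        calc Pf n j * Real.exp (-((j:ℝ) * ((j:ℝ) - 1) * t) / θ) * Qf j k
            = Real.exp (-((j:ℝ) * ((j:ℝ) - 1) * t) / θ) * (Pf n j * Qf j k) := by ring
          _ = _ := by rw [hPQj, ← mul_div_assoc]
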